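/- Let R₁ and R₂ be unambiguous regexes over Σ whose languages overlap (so R₁·R₂ is ambiguous). Then the concatenation R₁·R₂ is infinitely ambiguous if and only if there exist words b, d, e, g over Σ such that the word c := d ++ e is nonempty, b ++ c^i ++ d ∈ L(R₁) for every i ∈ ℕ, and e ++ c^j ++ g ∈ L(R₂) for every j ∈ ℕ. (Paper's Theorem 2(a), Ambiguity of Concatenation, stated at the word level: this is the condition that L(R₁) contains the language of a regex BC*D and L(R₂) contains the language of a regex EF*G with ε ∉ L(C), ε ∉ L(F), and L(C) ∩ L(F) ∩ L(DE) ≠ ∅, instantiated at a common witness word c = f = d·e.) -/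

import Mathlib

/-! Shared definitions: words, word power, parse trees of regular expressions,
(un)ambiguity, finite/infinite ambiguity, and the Brabrand–Thomsen overlap. -/

universe u

variable {α : Type u}

/-- `wpow w n` is the `n`-fold concatenation `w^n` of the word `w` with itself. -/
def wpow (w : List α) : ℕ → List α
  | 0 => []
  | n + 1 => w ++ wpow w n

/-- Parse trees of a regular expression for a word, defined inductively:
the regex `ε` has a unique parse tree for the empty word; the character regex
for `a` has a unique parse tree for the word `[a]`; a parse tree of `R₁ + R₂`
(alternation) for `w` is a parse tree of `R₁` for `w` or a parse tree of `R₂`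
for `w` (the two sides distinct); a parse tree of `R₁ * R₂` (concatenation)
for `w` is a decomposition `w = u ++ v` with parse trees of `R₁` for `u` and
of `R₂` for `v`; a parse tree of `R*` for `w` is a finite list of words
(possibly empty entries) concatenating to `w` with a parse tree of `R` for each. -/
inductive ParseTree : RegularExpression α → List α → Type u where
  | eps : ParseTree RegularExpression.epsilon []
  | char (a : α) : ParseTree (RegularExpression.char a) [a]
  | plusLeft {R₁ R₂ : RegularExpression α} {w : List α} :
      ParseTree R₁ w → ParseTree (R₁ + R₂) w
  | plusRight {R₁ R₂ : RegularExpression α} {w : List α} :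
      ParseTree R₂ w → ParseTree (R₁ + R₂) w
  | comp {R₁ R₂ : RegularExpression α} {u v : List α} :
      ParseTree R₁ u → ParseTree R₂ v → ParseTree (R₁ * R₂) (u ++ v)
  | starNil {R : RegularExpression α} : ParseTree R.star []
  | starCons {R : RegularExpression α} {u v : List α} :
      ParseTree R u → ParseTree R.star v → ParseTree R.star (u ++ v)

/-- A regex is unambiguous if every word has at most one parse tree of it. -/
def Unambiguous (R : RegularExpression α) : Prop :=
  ∀ (w : List α) (t₁ t₂ : ParseTree R w), t₁ = t₂

/-- A regex is ambiguous if some word has two distinct parse trees of it. -/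
def Ambiguous (R : RegularExpression α) : Prop :=
  ∃ (w : List α) (t₁ t₂ : ParseTree R w), t₁ ≠ t₂

/-- The word `w` has at least `k` distinct parse trees of `R`. -/
def HasAtLeastTrees (R : RegularExpression α) (w : List α) (k : ℕ) : Prop :=
  ∃ l : List (ParseTree R w), l.Nodup ∧ k ≤ l.length

/-- Every word has at most `k` parse trees of `R`. -/
def BoundedBy (R : RegularExpression α) (k : ℕ) : Prop :=
  ∀ (w : List α) (l : List (ParseTree R w)), l.Nodup → l.length ≤ k

/-- `R` is finitely ambiguous: ambiguous, with a uniform bound on the number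
of parse trees of any word. -/
def FinitelyAmbiguous (R : RegularExpression α) : Prop :=
  Ambiguous R ∧ ∃ k : ℕ, BoundedBy R k

/-- `R` is infinitely ambiguous: for every `k` some word has more than `k`
parse trees of `R`. -/
def InfinitelyAmbiguous (R : RegularExpression α) : Prop :=
  ∀ k : ℕ, ∃ w : List α, HasAtLeastTrees R w (k + 1)

/-- Languages `L₁` and `L₂` overlap (nonemptiness of the Brabrand–Thomsen
overlap operator): there are words `x`, `y` and a nonempty word `a` with
`x ∈ L₁`, `x ++ a ∈ L₁`, `a ++ y ∈ L₂`, and `y ∈ L₂`. -/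
def Overlaps (L₁ L₂ : Language α) : Prop :=
  ∃ x y a : List α, a ≠ [] ∧ x ∈ L₁ ∧ x ++ a ∈ L₁ ∧ a ++ y ∈ L₂ ∧ y ∈ L₂

namespace BT2
open Computability
variable {α : Type u}

/-- Left quotient of a language by a word. -/
def lQ (L : Language α) (u : List α) : Language α := {z | u ++ z ∈ L}

/-- Right quotient of a language by a word. -/
def rQ (L : Language α) (v : List α) : Language α := {z | z ++ v ∈ L}

/-- Union of a set of languages. -/
def bigU (S : Set (Language α)) : Language α := {z | ∃ M ∈ S, z ∈ M}

lemma mem_lQ {L : Language α} {u z : List α} : z ∈ lQ L u ↔ u ++ z ∈ L := Iff.rfl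
lemma mem_rQ {L : Language α} {v z : List α} : z ∈ rQ L v ↔ z ++ v ∈ L := Iff.rfl
lemma mem_bigU {S : Set (Language α)} {z : List α} : z ∈ bigU S ↔ ∃ M ∈ S, z ∈ M := Iff.rfl

lemma lQ_append (L : Language α) (u m : List α) : lQ L (u ++ m) = lQ (lQ L u) m := by
  ext z
  change u ++ m ++ z ∈ L ↔ u ++ (m ++ z) ∈ L
  rw [List.append_assoc]

lemma rQ_append (L : Language α) (m v : List α) : rQ L (m ++ v) = rQ (rQ L v) m := by
  ext z
  change z ++ (m ++ v) ∈ L ↔ z ++ m ++ v ∈ L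
  rw [List.append_assoc]

lemma kstar_append {L : Language α} {x y : List α} (hx : x ∈ L∗) (hy : y ∈ L∗) :
    x ++ y ∈ L∗ := by
  rcases Language.mem_kstar.mp hx with ⟨S, rfl, hS⟩
  rcases Language.mem_kstar.mp hy with ⟨T, rfl, hT⟩
  refine Language.mem_kstar.mpr ⟨S ++ T, by simp, ?_⟩
  intro y hy; rcases List.mem_append.mp hy with h | h
  · exact hS y h
  · exact hT y h

lemma single_mem_kstar {L : Language α} {x : List α} (hx : x ∈ L) : x ∈ L∗ :=
  Language.mem_kstar.mpr ⟨[x], by simp, by simpa⟩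

lemma cons_mem_kstar {L : Language α} {x y : List α} (hx : x ∈ L) (hy : y ∈ L∗) :
    x ++ y ∈ L∗ := kstar_append (single_mem_kstar hx) hy

lemma lQ_add (L₁ L₂ : Language α) (u : List α) :
    lQ (L₁ + L₂) u = lQ L₁ u + lQ L₂ u :=
  Set.ext fun z => (Language.mem_add L₁ L₂ (u ++ z)).trans
    ((Language.mem_add (lQ L₁ u) (lQ L₂ u) z).symm)

lemma lQ_mul (L₁ L₂ : Language α) (u : List α) :
    lQ (L₁ * L₂) u = (lQ L₁ u) * L₂ +
      bigU {M | ∃ x y, u = x ++ y ∧ x ∈ L₁ ∧ M = lQ L₂ y} := by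
  ext z
  rw [Language.mem_add, mem_lQ]
  constructor
  · intro hz
    rcases Language.mem_mul.mp hz with ⟨p, hp, q, hq, hpq⟩
    rcases List.append_eq_append_iff.mp hpq with ⟨a', hu, hq2⟩ | ⟨c', hp2, hz2⟩
    · refine Or.inr (mem_bigU.mpr ⟨lQ L₂ a', ⟨p, a', hu, hp, rfl⟩, ?_⟩)
      rw [mem_lQ, ← hq2]; exact hq
    · refine Or.inl ?_
      subst hz2
      exact Language.append_mem_mul (by rw [mem_lQ, ← hp2]; exact hp) hq
  · intro hz
    rcases hz with hz | hz
    · rcases Language.mem_mul.mp hz with ⟨z₁, hz₁, q, hq, rfl⟩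
      rw [← List.append_assoc]
      exact Language.append_mem_mul hz₁ hq
    · rcases mem_bigU.mp hz with ⟨M, ⟨x, y, rfl, hx, rfl⟩, hzM⟩
      rw [List.append_assoc]
      exact Language.append_mem_mul hx hzM

lemma star_split (L : Language α) :
    ∀ (S : List (List α)) (u z : List α), u ++ z = S.flatten →
      (∀ w ∈ S, w ∈ L) → z ≠ [] →
      ∃ x y z₁ r, u = x ++ y ∧ z = z₁ ++ r ∧ x ∈ L∗ ∧ (y ++ z₁) ∈ L ∧ r ∈ L∗ := by
  intro S
  induction S with
  | nil =>
    intro u z h _ hz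
    exact absurd (List.append_eq_nil_iff.mp h).2 hz
  | cons s S ih =>
    intro u z h hmem hz
    rw [List.flatten_cons] at h
    rcases List.append_eq_append_iff.mp h with ⟨a', hs, hz2⟩ | ⟨c', hu, hj⟩
    · exact ⟨[], u, a', S.flatten, by simp, hz2, Language.nil_mem_kstar L,
        by rw [← hs]; exact hmem s (by simp),
        Language.join_mem_kstar fun y hy => hmem y (by simp [hy])⟩
    · rcases ih c' z hj.symm (fun y hy => hmem y (by simp [hy])) hz with
        ⟨x, y, z₁, r, hc, hzz, hx, hyz, hr⟩
      exact ⟨s ++ x, y, z₁, r, by rw [hu, hc, List.append_assoc], hzz,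
        cons_mem_kstar (hmem s (by simp)) hx, hyz, hr⟩

open Classical in
lemma lQ_kstar (L : Language α) (u : List α) :
    lQ L∗ u = bigU {M | ∃ x y, u = x ++ y ∧ x ∈ L∗ ∧ M = (lQ L y) * L∗} +
      (if u ∈ L∗ then (1 : Language α) else 0) := by
  ext z
  rw [Language.mem_add, mem_lQ]
  constructor
  · intro hz
    by_cases hz0 : z = []
    · subst hz0
      rw [List.append_nil] at hz
      refine Or.inr ?_
      rw [if_pos hz]
      exact Language.nil_mem_one
    · rcases Language.mem_kstar.mp hz with ⟨S, hS, hmem⟩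
      rcases star_split L S u z hS hmem hz0 with ⟨x, y, z₁, r, hu, hzz, hx, hyz, hr⟩
      refine Or.inl (mem_bigU.mpr ⟨(lQ L y) * L∗, ⟨x, y, hu, hx, rfl⟩, ?_⟩)
      rw [hzz]
      exact Language.append_mem_mul hyz hr
  · intro hz
    rcases hz with hz | hz
    · rcases mem_bigU.mp hz with ⟨M, ⟨x, y, rfl, hx, rfl⟩, hzM⟩
      rcases Language.mem_mul.mp hzM with ⟨z₁, hz₁, r, hr, rfl⟩
      have : x ++ y ++ (z₁ ++ r) = x ++ ((y ++ z₁) ++ r) := by simp [List.append_assoc]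
      rw [this]
      exact kstar_append hx (cons_mem_kstar hz₁ hr)
    · split_ifs at hz with hu
      · rw [Language.mem_one] at hz
        subst hz
        rw [List.append_nil]
        exact hu
      · exact absurd hz (Language.notMem_zero z)



/-- Finiteness of the set of left quotients. -/
def FQ (L : Language α) : Prop := (Set.range (lQ L)).Finite

lemma fq_zero : FQ (0 : Language α) := by
  apply (Set.finite_singleton (0 : Language α)).subset
  rintro _ ⟨u, rfl⟩
  have : lQ (0 : Language α) u = 0 := by
    ext z; exact ⟨fun h => absurd h (Language.notMem_zero _), fun h => absurd h (Language.notMem_zero _)⟩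
  simp [this]

lemma fq_one : FQ (1 : Language α) := by
  apply ((Set.finite_singleton (0 : Language α)).insert (1 : Language α)).subset
  rintro _ ⟨u, rfl⟩
  rcases u with _ | ⟨a, u⟩
  · left
    ext z
    rw [mem_lQ, List.nil_append]
  · right
    ext z
    constructor
    · intro hz
      exact absurd ((Language.mem_one _).mp hz) (by simp)
    · intro hz
      exact absurd hz (Language.notMem_zero z)

lemma fq_char (a : α) : FQ ({[a]} : Language α) := by
  apply (Set.Finite.insert ({[a]} : Language α)
    ((Set.finite_singleton (0 : Language α)).insert (1 : Language α))).subset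
  rintro _ ⟨u, rfl⟩
  rcases u with _ | ⟨b, u⟩
  · left
    ext z
    rw [mem_lQ, List.nil_append]
  · by_cases h : b = a ∧ u = []
    · obtain ⟨hb, hu⟩ := h
      subst hu
      right; left
      ext z
      constructor
      · intro hz
        have h2 : (b :: [] : List α) ++ z = [a] := hz
        rw [Language.mem_one]
        simp only [List.cons_append, List.nil_append, List.cons.injEq] at h2
        exact h2.2
      · intro hz
        rw [Language.mem_one] at hz
        subst hz
        show (b :: [] : List α) ++ [] ∈ ({[a]} : Language α)
        simp only [List.append_nil]
        exact Set.mem_singleton_iff.mpr (by rw [hb])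
    · right; right
      rw [Set.mem_singleton_iff]
      ext z
      constructor
      · intro hz
        have h2 : (b :: u) ++ z = [a] := hz
        simp only [List.cons_append, List.cons.injEq] at h2
        exact absurd ⟨h2.1, (List.append_eq_nil_iff.mp h2.2).1⟩ h
      · intro hz
        exact absurd hz (Language.notMem_zero z)

lemma fq_add {L₁ L₂ : Language α} (h₁ : FQ L₁) (h₂ : FQ L₂) : FQ (L₁ + L₂) := by
  apply (Set.Finite.image2 (· + ·) h₁ h₂).subset
  rintro _ ⟨u, rfl⟩
  exact Set.mem_image2.mpr ⟨lQ L₁ u, Set.mem_range_self u, lQ L₂ u, Set.mem_range_self u,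
    (lQ_add L₁ L₂ u).symm⟩

lemma fq_mul {L₁ L₂ : Language α} (h₁ : FQ L₁) (h₂ : FQ L₂) : FQ (L₁ * L₂) := by
  apply (Set.Finite.image2 (fun A T => A * L₂ + bigU T) h₁ h₂.finite_subsets).subset
  rintro _ ⟨u, rfl⟩
  refine Set.mem_image2.mpr ⟨lQ L₁ u, Set.mem_range_self u,
    {M | ∃ x y, u = x ++ y ∧ x ∈ L₁ ∧ M = lQ L₂ y}, ?_, (lQ_mul L₁ L₂ u).symm⟩
  rintro M ⟨x, y, _, _, rfl⟩
  exact Set.mem_range_self y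

open Classical in
lemma fq_kstar {L : Language α} (h : FQ L) : FQ (L∗) := by
  apply (Set.Finite.image2 (fun T E => bigU T + E)
    ((h.image (fun A => A * L∗)).finite_subsets)
    ((Set.finite_singleton (0 : Language α)).insert (1 : Language α))).subset
  rintro _ ⟨u, rfl⟩
  refine Set.mem_image2.mpr ⟨{M | ∃ x y, u = x ++ y ∧ x ∈ L∗ ∧ M = (lQ L y) * L∗}, ?_,
    (if u ∈ L∗ then (1 : Language α) else 0), ?_, (lQ_kstar L u).symm⟩
  · rintro M ⟨x, y, _, _, rfl⟩
    exact ⟨lQ L y, Set.mem_range_self y, rfl⟩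
  · by_cases hu : u ∈ L∗
    · rw [if_pos hu]; left; rfl
    · rw [if_neg hu]; right; rfl

lemma fq_regex (R : RegularExpression α) : FQ R.matches' := by
  induction R with
  | zero => exact fq_zero
  | epsilon => exact fq_one
  | char a => exact fq_char a
  | plus P Q ihP ihQ => exact fq_add ihP ihQ
  | comp P Q ihP ihQ => exact fq_mul ihP ihQ
  | star P ih => exact fq_kstar ih



/-- Reversal of a regular expression. -/
def revRE : RegularExpression α → RegularExpression α
  | RegularExpression.zero => RegularExpression.zero
  | RegularExpression.epsilon => RegularExpression.epsilon
  | RegularExpression.char a => RegularExpression.char a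
  | RegularExpression.plus P Q => RegularExpression.plus (revRE P) (revRE Q)
  | RegularExpression.comp P Q => RegularExpression.comp (revRE Q) (revRE P)
  | RegularExpression.star P => RegularExpression.star (revRE P)

/-- Reversal of a language. -/
def revL (L : Language α) : Language α := {w | w.reverse ∈ L}

lemma mem_revL {L : Language α} {w : List α} : w ∈ revL L ↔ w.reverse ∈ L := Iff.rfl

lemma kstar_rev (L : Language α) : (revL L)∗ = revL (L∗) := by
  ext z
  constructor
  · intro hz
    rcases Language.mem_kstar.mp hz with ⟨S, rfl, hS⟩
    show S.flatten.reverse ∈ L∗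
    rw [List.reverse_flatten]
    refine Language.join_mem_kstar ?_
    intro y hy
    rcases List.mem_reverse.mp hy with hy'
    rcases List.mem_map.mp hy' with ⟨x, hx, rfl⟩
    exact hS x hx
  · intro hz
    have hz' : z.reverse ∈ L∗ := hz
    rcases Language.mem_kstar.mp hz' with ⟨T, hT, hmem⟩
    have hzeq : z = ((T.map List.reverse).reverse).flatten := by
      rw [← List.reverse_flatten, ← hT, List.reverse_reverse]
    rw [hzeq]
    refine Language.join_mem_kstar ?_
    intro y hy
    rcases List.mem_reverse.mp hy with hy'
    rcases List.mem_map.mp hy' with ⟨x, hx, rfl⟩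
    show x.reverse.reverse ∈ L
    rw [List.reverse_reverse]
    exact hmem x hx

lemma revRE_matches (R : RegularExpression α) :
    (revRE R).matches' = revL R.matches' := by
  induction R with
  | zero =>
    ext z
    exact ⟨fun h => absurd h (Language.notMem_zero _),
      fun h => absurd h (Language.notMem_zero _)⟩
  | epsilon =>
    ext z
    show z ∈ (1 : Language α) ↔ z.reverse ∈ (1 : Language α)
    rw [Language.mem_one, Language.mem_one, List.reverse_eq_nil_iff]
  | char a =>
    ext z
    show z ∈ ({[a]} : Language α) ↔ z.reverse ∈ ({[a]} : Language α)
    change z = [a] ↔ z.reverse = [a]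
    rw [List.reverse_eq_iff]
    simp
  | plus P Q ihP ihQ =>
    ext z
    show z ∈ (revRE P).matches' + (revRE Q).matches' ↔ _
    rw [Language.mem_add, ihP, ihQ]
    exact Iff.rfl
  | comp P Q ihP ihQ =>
    ext z
    show z ∈ (revRE Q).matches' * (revRE P).matches' ↔ z.reverse ∈ P.matches' * Q.matches'
    rw [Language.mem_mul, Language.mem_mul]
    constructor
    · rintro ⟨x, hx, y, hy, rfl⟩
      rw [ihQ] at hx
      rw [ihP] at hy
      exact ⟨y.reverse, hy, x.reverse, hx, by rw [List.reverse_append]⟩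
    · rintro ⟨p, hp, q, hq, hpq⟩
      refine ⟨q.reverse, ?_, p.reverse, ?_, ?_⟩
      · rw [ihQ]
        show q.reverse.reverse ∈ Q.matches'
        rw [List.reverse_reverse]; exact hq
      · rw [ihP]
        show p.reverse.reverse ∈ P.matches'
        rw [List.reverse_reverse]; exact hp
      · rw [← List.reverse_append, hpq, List.reverse_reverse]
  | star P ih =>
    show ((revRE P).matches')∗ = _
    rw [ih, kstar_rev]
    rfl

lemma rq_regex (R : RegularExpression α) : (Set.range (rQ R.matches')).Finite := by
  have h := fq_regex (revRE R)
  rw [revRE_matches] at h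
  apply (h.image revL).subset
  rintro _ ⟨v, rfl⟩
  refine ⟨lQ (revL R.matches') v.reverse, Set.mem_range_self _, ?_⟩
  ext z
  show (z.reverse ∈ lQ (revL R.matches') v.reverse) ↔ z ++ v ∈ R.matches'
  rw [mem_lQ]
  show (v.reverse ++ z.reverse).reverse ∈ R.matches' ↔ _
  rw [List.reverse_append, List.reverse_reverse, List.reverse_reverse]


namespace BT2b
open Computability
open BT2
variable {α : Type u}

lemma wpow_succ' (c : List α) (n : ℕ) : wpow c (n + 1) = wpow c n ++ c := by
  induction n with
  | zero => simp [wpow]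
  | succ n ih =>
    show c ++ wpow c (n + 1) = wpow c (n + 1) ++ c
    conv_lhs => rw [ih]
    rw [← List.append_assoc]
    rfl

lemma length_wpow (c : List α) (n : ℕ) : (wpow c n).length = n * c.length := by
  induction n with
  | zero => simp [wpow]
  | succ n ih => simp [wpow, ih]; ring

lemma pump_left {L : Language α} {u m : List α} (hq : lQ L u = lQ L (u ++ m))
    (hu : u ∈ L) : ∀ i, u ++ wpow m i ∈ L := by
  have key : ∀ i, wpow m i ∈ lQ L u := by
    intro i
    induction i with
    | zero =>
      show u ++ [] ∈ L
      rwa [List.append_nil]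
    | succ i ih =>
      show m ++ wpow m i ∈ lQ L u
      have h2 : wpow m i ∈ lQ L (u ++ m) := hq ▸ ih
      rw [lQ_append] at h2
      exact h2
  intro i
  exact key i

lemma pump_right {L : Language α} {v m : List α} (hq : rQ L v = rQ L (m ++ v))
    (hv : v ∈ L) : ∀ j, wpow m j ++ v ∈ L := by
  have key : ∀ j, wpow m j ∈ rQ L v := by
    intro j
    induction j with
    | zero =>
      show [] ++ v ∈ L
      rwa [List.nil_append]
    | succ j ih =>
      have h1 : wpow m (j + 1) ++ v = wpow m j ++ (m ++ v) := by
        rw [wpow_succ', List.append_assoc]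
      show wpow m (j + 1) ++ v ∈ L
      rw [h1]
      have := hq ▸ ih
      exact this
  intro j
  exact key j

/-- A parse tree yields membership in the matched language. -/
lemma tree_mem {R : RegularExpression α} {w : List α} (t : ParseTree R w) :
    w ∈ R.matches' := by
  induction t with
  | eps => exact Language.nil_mem_one
  | char a => exact rfl
  | plusLeft t ih => exact (Language.mem_add _ _ _).mpr (Or.inl ih)
  | plusRight t ih => exact (Language.mem_add _ _ _).mpr (Or.inr ih)
  | comp t₁ t₂ ih₁ ih₂ => exact Language.append_mem_mul ih₁ ih₂
  | starNil => exact Language.nil_mem_kstar _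
  | starCons t ts ih ihs => exact cons_mem_kstar ih ihs

/-- Membership yields a parse tree. -/
lemma mem_tree : ∀ (R : RegularExpression α) (w : List α),
    w ∈ R.matches' → Nonempty (ParseTree R w) := by
  intro R
  induction R with
  | zero => intro w h; exact absurd h (Language.notMem_zero w)
  | epsilon =>
    intro w h
    have : w = [] := (Language.mem_one w).mp h
    subst this
    exact ⟨ParseTree.eps⟩
  | char a =>
    intro w h
    have : w = [a] := Set.mem_singleton_iff.mp h
    subst this
    exact ⟨ParseTree.char a⟩
  | plus P Q ihP ihQ =>
    intro w h
    rcases (Language.mem_add _ _ _).mp h with h | h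
    · exact (ihP w h).elim fun t => ⟨ParseTree.plusLeft t⟩
    · exact (ihQ w h).elim fun t => ⟨ParseTree.plusRight t⟩
  | comp P Q ihP ihQ =>
    intro w h
    rcases Language.mem_mul.mp h with ⟨u, hu, v, hv, rfl⟩
    exact (ihP u hu).elim fun t₁ => (ihQ v hv).elim fun t₂ => ⟨ParseTree.comp t₁ t₂⟩
  | star P ih =>
    intro w h
    rcases Language.mem_kstar.mp h with ⟨S, rfl, hS⟩
    clear h
    induction S with
    | nil => exact ⟨ParseTree.starNil⟩
    | cons s S ihS =>
      have h1 : (s :: S).flatten = s ++ S.flatten := List.flatten_cons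
      rw [h1]
      exact (ih s (hS s (by simp))).elim fun t =>
        (ihS (fun y hy => hS y (by simp [hy]))).elim fun ts => ⟨ParseTree.starCons t ts⟩

variable {R₁ R₂ : RegularExpression α}

/-- The left part of the split of a concatenation parse tree. -/
def prefOf : {w : List α} → ParseTree (R₁ * R₂) w → List α
  | _, ParseTree.comp (u := u) _ _ => u

lemma tree_inv {w : List α} (t : ParseTree (R₁ * R₂) w) :
    ∃ (u v : List α) (h : u ++ v = w),
      (∃ (t₁ : ParseTree R₁ u) (t₂ : ParseTree R₂ v), t = h ▸ ParseTree.comp t₁ t₂) ∧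
      prefOf t = u := by
  cases t with
  | comp t₁ t₂ => exact ⟨_, _, rfl, ⟨t₁, t₂, rfl⟩, rfl⟩

lemma prefOf_cast {u v w : List α} (h : u ++ v = w) (t₁ : ParseTree R₁ u)
    (t₂ : ParseTree R₂ v) : prefOf (h ▸ ParseTree.comp t₁ t₂ : ParseTree (R₁ * R₂) w) = u := by
  subst h
  rfl

lemma prefOf_inj (h₁ : Unambiguous R₁) (h₂ : Unambiguous R₂) {w : List α}
    (t t' : ParseTree (R₁ * R₂) w) (hp : prefOf t = prefOf t') : t = t' := by
  obtain ⟨u, v, h, ⟨t₁, t₂, ht⟩, hpu⟩ := tree_inv t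
  obtain ⟨u', v', h', ⟨t₁', t₂', ht'⟩, hpu'⟩ := tree_inv t'
  have huu : u = u' := by rw [← hpu, ← hpu', hp]
  subst huu
  have hvv : v = v' := List.append_cancel_left (h.trans h'.symm)
  subst hvv
  subst h
  rw [ht, ht', h₁ u t₁ t₁', h₂ v t₂ t₂']

lemma wpow_add (c : List α) (m n : ℕ) : wpow c (m + n) = wpow c m ++ wpow c n := by
  induction m with
  | zero => simp [wpow]
  | succ m ih =>
    have h : m + 1 + n = (m + n) + 1 := by omega
    rw [h]
    show c ++ wpow c (m + n) = (c ++ wpow c m) ++ wpow c n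
    rw [ih, List.append_assoc]

lemma combine {L₁ L₂ : Language α} {w u v v' : List α} {m : List α}
    (h1 : u ++ v = w) (h2 : (u ++ m) ++ v' = w) (hm : m ≠ [])
    (hu : u ∈ L₁) (hv' : v' ∈ L₂)
    (hq1 : lQ L₁ u = lQ L₁ (u ++ m)) (hq2 : rQ L₂ v = rQ L₂ v') :
    ∃ b d e g : List α, d ++ e ≠ [] ∧
      (∀ i : ℕ, b ++ wpow (d ++ e) i ++ d ∈ L₁) ∧
      (∀ j : ℕ, e ++ wpow (d ++ e) j ++ g ∈ L₂) := by
  have hv_eq : v = m ++ v' := by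
    have h3 : u ++ v = u ++ (m ++ v') := by rw [h1, ← h2, List.append_assoc]
    exact List.append_cancel_left h3
  subst hv_eq
  refine ⟨u, m, [], v', by simpa using hm, ?_, ?_⟩
  · intro i
    have hp := pump_left hq1 hu (i + 1)
    have h4 : u ++ wpow (m ++ []) i ++ m = u ++ wpow m (i + 1) := by
      rw [List.append_nil, List.append_assoc, ← wpow_succ']
    rw [h4]
    exact hp
  · intro j
    have hp := pump_right hq2.symm hv' j
    have h5 : ([] : List α) ++ wpow (m ++ []) j ++ v' = wpow m j ++ v' := by
      rw [List.append_nil, List.nil_append]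
    rw [h5]
    exact hp

end BT2b

end BT2

open BT2

/-- Theorem 2(a): for unambiguous `R₁`, `R₂` with overlapping languages,
`R₁·R₂` is infinitely ambiguous iff there are words `b d e g` with
`c := d ++ e` nonempty, `b ++ c^i ++ d ∈ L(R₁)` for all `i`, and
`e ++ c^j ++ g ∈ L(R₂)` for all `j`. -/
theorem stmt_2 {α : Type u} (R₁ R₂ : RegularExpression α)
    (h₁ : Unambiguous R₁) (h₂ : Unambiguous R₂)
    (hov : Overlaps R₁.matches' R₂.matches') :
    InfinitelyAmbiguous (R₁ * R₂) ↔
      ∃ b d e g : List α, d ++ e ≠ [] ∧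
        (∀ i : ℕ, b ++ wpow (d ++ e) i ++ d ∈ R₁.matches') ∧
        (∀ j : ℕ, e ++ wpow (d ++ e) j ++ g ∈ R₂.matches') := by
  classical
  constructor
  · -- forward direction
    intro hinf
    have hQ1 : (Set.range (BT2.lQ R₁.matches')).Finite := BT2.fq_regex R₁
    have hQ2 : (Set.range (BT2.rQ R₂.matches')).Finite := BT2.rq_regex R₂
    have hprod := hQ1.prod hQ2
    obtain ⟨w, l, hnd, hlen⟩ := hinf hprod.toFinset.card
    have hnd' : (l.map BT2b.prefOf).Nodup :=
      List.Nodup.map_on (fun t _ t' _ h => BT2b.prefOf_inj h₁ h₂ t t' h) hnd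
    have hmem : ∀ u ∈ l.map BT2b.prefOf,
        ∃ v, u ++ v = w ∧ u ∈ R₁.matches' ∧ v ∈ R₂.matches' := by
      intro u hu
      rcases List.mem_map.mp hu with ⟨t, _, rfl⟩
      obtain ⟨u', v, h, ⟨t₁, t₂, _⟩, hpu⟩ := BT2b.tree_inv t
      refine ⟨v, ?_, ?_, BT2b.tree_mem t₂⟩
      · rw [hpu]; exact h
      · rw [hpu]; exact BT2b.tree_mem t₁
    have hcard : hprod.toFinset.card < (l.map BT2b.prefOf).toFinset.card := by
      rw [List.toFinset_card_of_nodup hnd', List.length_map]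
      omega
    obtain ⟨u, hu, u', hu', hne, hfeq⟩ :=
      Finset.exists_ne_map_eq_of_card_lt_of_maps_to hcard
        (f := fun u => (BT2.lQ R₁.matches' u, BT2.rQ R₂.matches' (w.drop u.length)))
        (fun u _ => by
          rw [Finset.mem_coe, Set.Finite.mem_toFinset]
          exact Set.mem_prod.mpr ⟨Set.mem_range_self u, Set.mem_range_self _⟩)
    obtain ⟨v, hvw, hu1, hv2⟩ := hmem u (List.mem_toFinset.mp hu)
    obtain ⟨v', hvw', hu1', hv2'⟩ := hmem u' (List.mem_toFinset.mp hu')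
    have hd : w.drop u.length = v := by rw [← hvw]; exact List.drop_left
    have hd' : w.drop u'.length = v' := by rw [← hvw']; exact List.drop_left
    have hq1 : BT2.lQ R₁.matches' u = BT2.lQ R₁.matches' u' := congrArg Prod.fst hfeq
    have hq2 : BT2.rQ R₂.matches' v = BT2.rQ R₂.matches' v' := by
      have := congrArg Prod.snd hfeq
      rwa [hd, hd'] at this
    rcases List.prefix_or_prefix_of_prefix ⟨v, hvw⟩ ⟨v', hvw'⟩ with hc | hc
    · obtain ⟨m, rfl⟩ := hc
      have hm : m ≠ [] := by rintro rfl; simp at hne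
      exact BT2b.combine hvw hvw' hm hu1 hv2' hq1 hq2
    · obtain ⟨m, rfl⟩ := hc
      have hm : m ≠ [] := by rintro rfl; simp at hne
      exact BT2b.combine hvw' hvw hm hu1' hv2 hq1.symm hq2.symm
  · -- backward direction
    rintro ⟨b, d, e, g, hcne, H1, H2⟩ k
    refine ⟨b ++ wpow (d ++ e) (k + 1) ++ g, ?_⟩
    have hsplit : ∀ i : ℕ, i ≤ k →
        (b ++ wpow (d ++ e) i ++ d) ++ (e ++ wpow (d ++ e) (k - i) ++ g) =
          b ++ wpow (d ++ e) (k + 1) ++ g := by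
      intro i hi
      have harith : i + (1 + (k - i)) = k + 1 := by omega
      have h2 : wpow (d ++ e) (k + 1) = wpow (d ++ e) i ++ (d ++ e) ++ wpow (d ++ e) (k - i) := by
        rw [← harith, BT2b.wpow_add, BT2b.wpow_add]
        simp [wpow, List.append_assoc]
      rw [h2]
      simp [List.append_assoc]
    refine ⟨(List.range (k + 1)).map (fun i =>
      (hsplit (min i k) (Nat.min_le_right i k)) ▸
        ParseTree.comp (BT2b.mem_tree R₁ _ (H1 (min i k))).some
          (BT2b.mem_tree R₂ _ (H2 (k - min i k))).some), ?_, ?_⟩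
    · refine List.Nodup.map_on ?_ List.nodup_range
      intro x hx y hy hfe
      rw [List.mem_range] at hx hy
      have hpe := congrArg BT2b.prefOf hfe
      rw [BT2b.prefOf_cast, BT2b.prefOf_cast] at hpe
      have hxm : min x k = x := Nat.min_eq_left (by omega)
      have hym : min y k = y := Nat.min_eq_left (by omega)
      rw [hxm, hym] at hpe
      have hlen2 := congrArg List.length hpe
      simp only [List.length_append, BT2b.length_wpow] at hlen2
      have hclen : 0 < d.length + e.length := by
        simpa using List.length_pos_iff.mpr hcne
      have h6 : x * (d.length + e.length) = y * (d.length + e.length) := by linarith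
      exact Nat.eq_of_mul_eq_mul_right hclen h6
    · rw [List.length_map, List.length_range]
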